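/- Let p > 1 and μ : (0,∞) → R be increasing with μ(z) = z^{1/p} for z ≥ 1 and μ(z) = log z for z < 1/2. Then for all a, b > 0, (a - b)(μ(a) - μ(b)) ≥ c (a - b)(a^{1/p} - b^{1/p}) for some constant c > 0 depending only on p and μ; in particular both sides are nonnegative since μ and z ↦ z^{1/p} are increasing. -/

import Mathlib

open Set

/-- For `p > 1` and `μ : (0,∞) → ℝ` of class `C¹` with `μ' > 0`, `μ(z) = z^{1/p}` for
`z ≥ 1` and `μ(z) = log z` for `0 < z < 1/2`, there is `c > 0` (depending only on `p` and
`μ`) such that `(a-b)(μ(a)-μ(b)) ≥ c (a-b)(a^{1/p}-b^{1/p})` for all `a, b > 0`; in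
particular both sides are nonnegative. -/
theorem stmt13 (p : ℝ) (hp : 1 < p) (μ : ℝ → ℝ)
    (hC1 : ContDiffOn ℝ 1 μ (Set.Ioi 0))
    (hμ' : ∀ z > (0:ℝ), 0 < deriv μ z)
    (hμ1 : ∀ z : ℝ, 1 ≤ z → μ z = z ^ (1 / p))
    (hμ2 : ∀ z : ℝ, 0 < z → z < 1 / 2 → μ z = Real.log z) :
    ∃ c : ℝ, 0 < c ∧ ∀ a b : ℝ, 0 < a → 0 < b →
      c * ((a - b) * (a ^ (1 / p) - b ^ (1 / p))) ≤ (a - b) * (μ a - μ b) ∧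
      0 ≤ (a - b) * (μ a - μ b) ∧
      0 ≤ (a - b) * (a ^ (1 / p) - b ^ (1 / p)) := by
  have hp0 : (0:ℝ) < p := lt_trans one_pos hp
  have hq0 : 0 < 1 / p := by positivity
  have hq1 : 1 / p ≤ 1 := by
    rw [div_le_one hp0]; exact hp.le
  -- continuity of deriv μ on Ioi 0
  have hderivcont : ContinuousOn (deriv μ) (Set.Ioi 0) :=
    hC1.continuousOn_deriv_of_isOpen isOpen_Ioi le_rfl
  have hsub : Icc (1/2 : ℝ) 2 ⊆ Ioi 0 := by
    intro x hx; exact lt_of_lt_of_le (by norm_num) hx.1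
  obtain ⟨z0, hz0, hmin⟩ := (isCompact_Icc : IsCompact (Icc (1/2:ℝ) 2)).exists_isMinOn
    ⟨1, by norm_num⟩ (hderivcont.mono hsub)
  set m := deriv μ z0 with hm_def
  have hm : 0 < m := hμ' z0 (hsub hz0)
  set c := min 1 (m/4) with hc_def
  have hc : 0 < c := lt_min one_pos (by positivity)
  have hc1 : c ≤ 1 := min_le_left _ _
  have hcm : c ≤ m / 4 := min_le_right _ _
  refine ⟨c, hc, ?_⟩
  -- differentiability of μ at points of Ioi 0
  have hdiff : ∀ x : ℝ, 0 < x → DifferentiableAt ℝ μ x := fun x hx =>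
    (hC1.differentiableOn one_ne_zero).differentiableAt (Ioi_mem_nhds hx)
  -- the auxiliary function g = μ - c * rpow is monotone on Ioi 0
  set g : ℝ → ℝ := fun z => μ z - c * z ^ (1/p) with hg_def
  have hgderiv : ∀ x : ℝ, 0 < x →
      HasDerivAt g (deriv μ x - c * ((1/p) * x ^ (1/p - 1))) x := by
    intro x hx
    exact ((hdiff x hx).hasDerivAt).sub
      ((Real.hasDerivAt_rpow_const (Or.inl hx.ne')).const_mul c)
  have hkey : ∀ x : ℝ, 0 < x → c * ((1/p) * x ^ (1/p - 1)) ≤ deriv μ x := by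
    intro x hx
    have hxp : 0 ≤ (1/p) * x ^ (1/p - 1) := by positivity
    rcases lt_or_ge x (1/2) with hx2 | hx2
    · -- small x : deriv μ x = x⁻¹
      have heq : μ =ᶠ[nhds x] Real.log := by
        filter_upwards [Ioo_mem_nhds hx hx2] with z hz
        exact hμ2 z hz.1 hz.2
      have hdx : deriv μ x = x⁻¹ := by rw [heq.deriv_eq, Real.deriv_log]
      rw [hdx]
      have hxs : x ^ (1/p - 1) = x ^ (1/p) / x := by
        rw [Real.rpow_sub hx, Real.rpow_one]
      have h1 : x ^ (1/p) ≤ 1 :=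
        Real.rpow_le_one hx.le (by linarith) hq0.le
      calc c * ((1/p) * x ^ (1/p - 1)) ≤ 1 * (1 * (x ^ (1/p) / x)) := by
            rw [hxs]
            apply mul_le_mul hc1 (mul_le_mul hq1 le_rfl (by positivity) one_pos.le)
              (by positivity) one_pos.le
        _ ≤ x⁻¹ := by
            rw [one_mul, one_mul, div_eq_mul_inv]
            nlinarith [inv_pos.mpr hx]
    · rcases le_or_gt x 2 with hx3 | hx3
      · -- middle range: use the minimum m
        have hmem : x ∈ Icc (1/2:ℝ) 2 := ⟨hx2, hx3⟩
        have hmx : m ≤ deriv μ x := hmin hmem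
        have hxb : x ^ (1/p - 1) ≤ 4 := by
          have hxs : x ^ (1/p - 1) = x ^ (1/p) / x := by
            rw [Real.rpow_sub hx, Real.rpow_one]
          rw [hxs]
          have h1 : x ^ (1/p) ≤ 2 := by
            calc x ^ (1/p) ≤ 2 ^ (1/p : ℝ) :=
                  Real.rpow_le_rpow hx.le hx3 hq0.le
              _ ≤ 2 ^ (1:ℝ) := Real.rpow_le_rpow_of_exponent_le one_le_two hq1
              _ = 2 := Real.rpow_one 2
          rw [div_le_iff₀ hx]
          nlinarith
        calc c * ((1/p) * x ^ (1/p - 1)) ≤ (m/4) * (1 * 4) := by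
              apply mul_le_mul hcm _ hxp (by positivity)
              exact mul_le_mul hq1 hxb (by positivity) one_pos.le
          _ = m := by ring
          _ ≤ deriv μ x := hmx
      · -- large x : deriv μ x = (1/p) * x ^ (1/p - 1)
        have heq : μ =ᶠ[nhds x] fun z => z ^ (1/p) := by
          filter_upwards [Ioi_mem_nhds (show (1:ℝ) < x by linarith)] with z hz
          exact hμ1 z (le_of_lt hz)
        have hdx : deriv μ x = (1/p) * x ^ (1/p - 1) := by
          rw [heq.deriv_eq, Real.deriv_rpow_const x (1/p)]
        rw [hdx]
        nlinarith
  have hmono : MonotoneOn g (Ioi 0) := by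
    apply monotoneOn_of_deriv_nonneg (convex_Ioi 0)
    · intro x hx
      exact ((hgderiv x hx).differentiableAt).continuousAt.continuousWithinAt
    · rw [interior_Ioi]
      intro x hx
      exact ((hgderiv x hx).differentiableAt).differentiableWithinAt
    · rw [interior_Ioi]
      intro x hx
      rw [(hgderiv x hx).deriv]
      linarith [hkey x hx]
  -- key pointwise inequality for b ≤ a
  have key : ∀ a b : ℝ, 0 < b → b ≤ a →
      c * (a ^ (1/p) - b ^ (1/p)) ≤ μ a - μ b := by
    intro a b hb hba
    have := hmono (mem_Ioi.mpr hb) (mem_Ioi.mpr (lt_of_lt_of_le hb hba)) hba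
    simp only [hg_def] at this
    linarith
  intro a b ha hb
  have hrpow : ∀ x y : ℝ, 0 < x → x ≤ y → x ^ (1/p) ≤ y ^ (1/p) := fun x y hx hxy =>
    Real.rpow_le_rpow hx.le hxy hq0.le
  have main : c * ((a - b) * (a ^ (1/p) - b ^ (1/p))) ≤ (a - b) * (μ a - μ b) ∧
      0 ≤ (a - b) * (a ^ (1/p) - b ^ (1/p)) := by
    rcases le_total b a with hba | hab
    · have h1 := key a b hb hba
      have h2 : 0 ≤ a - b := by linarith
      have h3 : 0 ≤ a ^ (1/p) - b ^ (1/p) := by linarith [hrpow b a hb hba]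
      constructor
      · have := mul_le_mul_of_nonneg_left h1 h2
        nlinarith
      · positivity
    · have h1 := key b a ha hab
      have h2 : 0 ≤ b - a := by linarith
      have h3 : 0 ≤ b ^ (1/p) - a ^ (1/p) := by linarith [hrpow a b ha hab]
      constructor
      · have := mul_le_mul_of_nonneg_left h1 h2
        nlinarith
      · nlinarith
  refine ⟨main.1, ?_, main.2⟩
  calc (0:ℝ) ≤ c * ((a - b) * (a ^ (1/p) - b ^ (1/p))) := mul_nonneg hc.le main.2
    _ ≤ (a - b) * (μ a - μ b) := main.1
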